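/- Let D ⊂ ℝ² be a nonempty bounded open set and let (D_N)_{N≥1} be subsets of ℤ² such that: (i) there exists N₀ such that for all N ≥ N₀, every x ∈ D_N satisfies d_∞(x/N, ℝ²∖D) > 1/N; and (ii) for every δ > 0 there exists N₁ such that for all N ≥ N₁, D_N contains every x ∈ ℤ² with d_∞(x/N, ℝ²∖D) > δ. For N with D_N finite, let deg_ρ(N) denote the number of ordered pairs (x,y) with x ∈ D_N, y ∈ ℤ²∖D_N and ‖x−y‖₁ = 1 (the number of edges of ℤ² from D_N to its complement), and let |D_N| denote the cardinality of D_N. Then deg_ρ(N) / (4·|D_N| + deg_ρ(N)) → 0 as N → ∞. -/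
import Mathlib

open Filter Set MeasureTheory Metric ENNReal

private lemma box_finite (M : ℤ) : {x : ℤ × ℤ | |x.1| ≤ M ∧ |x.2| ≤ M}.Finite := by
  have h : {x : ℤ × ℤ | |x.1| ≤ M ∧ |x.2| ≤ M} ⊆ (Set.Icc (-M) M) ×ˢ (Set.Icc (-M) M) := by
    rintro ⟨a, b⟩ ⟨h1, h2⟩
    rw [abs_le] at h1 h2
    exact ⟨⟨h1.1, h1.2⟩, ⟨h2.1, h2.2⟩⟩
  exact ((Set.finite_Icc _ _).prod (Set.finite_Icc _ _)).subset h

private lemma dir4 {a b : ℤ} (h : |a| + |b| = 1) :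
    (a, b) = ((1 : ℤ), (0 : ℤ)) ∨ (a, b) = (-1, 0) ∨ (a, b) = (0, 1) ∨ (a, b) = (0, -1) := by
  rcases abs_cases a with ⟨h1, _⟩ | ⟨h1, _⟩ <;> rcases abs_cases b with ⟨h2, _⟩ | ⟨h2, _⟩ <;>
    simp only [Prod.mk.injEq] <;> omega

private def cube (N : ℕ) (x : ℤ × ℤ) : Set (ℝ × ℝ) :=
  Set.Ico ((x.1 : ℝ)/N) ((x.1 : ℝ)/N + 1/N) ×ˢ Set.Ico ((x.2 : ℝ)/N) ((x.2 : ℝ)/N + 1/N)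

private lemma cube_measurable (N : ℕ) (x : ℤ × ℤ) : MeasurableSet (cube N x) :=
  measurableSet_Ico.prod measurableSet_Ico

private lemma cube_volume (N : ℕ) (x : ℤ × ℤ) :
    volume (cube N x) = ENNReal.ofReal (1/N) * ENNReal.ofReal (1/N) := by
  rw [cube, Measure.volume_eq_prod, Measure.prod_prod, Real.volume_Ico, Real.volume_Ico]
  congr 1 <;> ring_nf

private lemma ico_int_aux {N : ℕ} (hN : (1:ℝ) ≤ N) {a b : ℤ} (hab : a < b) {z : ℝ}
    (h1 : z < (a:ℝ)/N + 1/N) (h2 : (b:ℝ)/N ≤ z) : False := by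
  have hN0 : (0:ℝ) < N := lt_of_lt_of_le one_pos hN
  have hab' : (a:ℝ) + 1 ≤ (b:ℝ) := by exact_mod_cast hab
  have : ((a:ℝ) + 1)/N ≤ (b:ℝ)/N := by gcongr
  rw [add_div] at this
  linarith

private lemma cube_disjoint {N : ℕ} (hN : (1:ℝ) ≤ N) {x y : ℤ × ℤ} (hxy : x ≠ y) :
    Disjoint (cube N x) (cube N y) := by
  rw [Set.disjoint_left]
  rintro z ⟨⟨hx1, hx1'⟩, hx2, hx2'⟩ ⟨⟨hy1, hy1'⟩, hy2, hy2'⟩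
  apply hxy
  have e1 : x.1 = y.1 := by
    rcases lt_trichotomy x.1 y.1 with h | h | h
    · exact (ico_int_aux hN h hx1' hy1).elim
    · exact h
    · exact (ico_int_aux hN h hy1' hx1).elim
  have e2 : x.2 = y.2 := by
    rcases lt_trichotomy x.2 y.2 with h | h | h
    · exact (ico_int_aux hN h hx2' hy2).elim
    · exact h
    · exact (ico_int_aux hN h hy2' hx2).elim
  exact Prod.ext e1 e2

private lemma mem_cube_dist {N : ℕ} (hN : (1:ℝ) ≤ N) {x : ℤ × ℤ} {z : ℝ × ℝ}
    (hz : z ∈ cube N x) : dist z (((x.1 : ℝ)/N, (x.2 : ℝ)/N)) < 1/N := by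
  have hN0 : (0:ℝ) < N := lt_of_lt_of_le one_pos hN
  obtain ⟨⟨h1, h1'⟩, h2, h2'⟩ := hz
  rw [Prod.dist_eq]
  apply max_lt <;> rw [Real.dist_eq, abs_sub_lt_iff] <;> constructor <;> simp only [] <;> linarith

private lemma card_le_of_cubes {N : ℕ} (hN : (1:ℝ) ≤ N) {A : Set (ℤ × ℤ)} (hA : A.Finite)
    {S : Set (ℝ × ℝ)} (hsub : ∀ x ∈ A, cube N x ⊆ S) (hS : volume S ≠ ⊤) :
    (A.ncard : ℝ) ≤ (N:ℝ)^2 * (volume S).toReal := by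
  classical
  have hN0 : (0:ℝ) < N := lt_of_lt_of_le one_pos hN
  set F := hA.toFinset with hF
  have hd : (↑F : Set (ℤ × ℤ)).PairwiseDisjoint (cube N) :=
    fun x _ y _ hxy => cube_disjoint hN hxy
  have h1 : volume (⋃ x ∈ F, cube N x) = ∑ x ∈ F, volume (cube N x) :=
    measure_biUnion_finset hd (fun b _ => cube_measurable N b)
  have h2 : (⋃ x ∈ F, cube N x) ⊆ S := by
    apply Set.iUnion₂_subset
    intro x hx
    exact hsub x (hA.mem_toFinset.mp hx)
  have h3 : ∑ x ∈ F, volume (cube N x) ≤ volume S := by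
    rw [← h1]; exact measure_mono h2
  rw [Finset.sum_congr rfl (fun x _ => cube_volume N x), Finset.sum_const, nsmul_eq_mul] at h3
  have h4 : ENNReal.ofReal ((F.card : ℝ) * (1/N * (1/N))) ≤ volume S := by
    rw [ENNReal.ofReal_mul (by positivity), ENNReal.ofReal_mul (by positivity),
      ENNReal.ofReal_natCast]
    exact h3
  rw [ENNReal.ofReal_le_iff_le_toReal hS] at h4
  have hcard : (A.ncard : ℝ) = (F.card : ℝ) := by rw [hF, Set.ncard_eq_toFinset_card A hA]
  rw [hcard]
  rw [show (1/(N:ℝ)) * (1/(N:ℝ)) = ((N:ℝ)^2)⁻¹ by rw [div_mul_div_comm, one_mul, one_div, sq],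
    ← div_eq_mul_inv, div_le_iff₀ (by positivity)] at h4
  linarith [h4]

set_option maxHeartbeats 2000000 in
/-- first assertion of Lemma 5.8: for an admissible lattice
approximation `D_N` of a nonempty bounded open `D ⊆ ℝ²`, the ratio of the boundary-vertex
degree `deg(ρ)` (the number of edges of `ℤ²` from `D_N` to its complement) to the total
degree `4|D_N| + deg(ρ)` tends to `0`. -/
theorem statement10
    (D : Set (ℝ × ℝ)) (hDne : D.Nonempty) (hDopen : IsOpen D)
    (hDbdd : Bornology.IsBounded D)
    (DN : ℕ → Set (ℤ × ℤ))
    (h1 : ∃ N₀ : ℕ, ∀ N ≥ N₀, ∀ x ∈ DN N,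
      (1 : ℝ) / N < Metric.infDist (((x.1 : ℝ) / N, (x.2 : ℝ) / N)) Dᶜ)
    (h2 : ∀ δ : ℝ, 0 < δ → ∃ N₁ : ℕ, ∀ N ≥ N₁, ∀ x : ℤ × ℤ,
      δ < Metric.infDist (((x.1 : ℝ) / N, (x.2 : ℝ) / N)) Dᶜ → x ∈ DN N)
    (degρ : ℕ → ℕ)
    (hdegρ : ∀ N, degρ N = {p : (ℤ × ℤ) × (ℤ × ℤ) |
      p.1 ∈ DN N ∧ p.2 ∉ DN N ∧ |p.1.1 - p.2.1| + |p.1.2 - p.2.2| = 1}.ncard) :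
    Tendsto (fun N => (degρ N : ℝ) / (4 * (DN N).ncard + degρ N)) atTop (nhds 0) := by
  classical
  obtain ⟨N₀, hN₀⟩ := h1
  obtain ⟨R, hR⟩ := hDbdd.subset_closedBall 0
  -- `Dᶜ` is nonempty since `D` is bounded
  have hDc : Dᶜ.Nonempty := by
    refine ⟨((0 : ℝ), |R| + 1), fun hmem => ?_⟩
    have h := hR hmem
    rw [Metric.mem_closedBall, Prod.dist_eq] at h
    have h2' : dist (|R| + 1 : ℝ) 0 ≤ R := le_trans (le_max_right _ _) h
    rw [Real.dist_eq, sub_zero] at h2'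
    have habs : |(|R| + 1 : ℝ)| = |R| + 1 := abs_of_nonneg (by positivity)
    rw [habs] at h2'
    linarith [le_abs_self R]
  -- membership of scaled points in `D`
  have hmemD : ∀ N, N₀ ≤ N → ∀ x ∈ DN N, (((x.1 : ℝ)/N, (x.2 : ℝ)/N) : ℝ × ℝ) ∈ D := by
    intro N hN x hx
    have h := hN₀ N hN x hx
    have hpos : 0 < infDist (((x.1 : ℝ)/N, (x.2 : ℝ)/N) : ℝ × ℝ) Dᶜ :=
      lt_of_le_of_lt (by positivity) h
    exact Metric.ball_infDist_compl_subset (Metric.mem_ball_self hpos)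
  -- finiteness of `DN N`
  have hfin : ∀ N, N₀ ≤ N → 1 ≤ N → (DN N).Finite := by
    intro N hN hN1
    have hN0 : (0:ℝ) < N := by exact_mod_cast hN1
    apply (box_finite ⌈(N:ℝ) * |R|⌉).subset
    intro x hx
    have h := hR (hmemD N hN x hx)
    rw [Metric.mem_closedBall, Prod.dist_eq] at h
    have key : ∀ a : ℤ, dist ((a:ℝ)/N) 0 ≤ R → |a| ≤ ⌈(N:ℝ) * |R|⌉ := by
      intro a ha
      rw [Real.dist_eq, sub_zero, abs_div, abs_of_nonneg (le_of_lt hN0)] at ha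
      have h2' : |(a:ℝ)| ≤ (N:ℝ) * |R| := by
        rw [div_le_iff₀ hN0] at ha
        calc |(a:ℝ)| ≤ R * N := ha
          _ ≤ |R| * N := by gcongr; exact le_abs_self R
          _ = (N:ℝ) * |R| := by ring
      have h3' : |(a:ℝ)| ≤ (⌈(N:ℝ) * |R|⌉ : ℝ) := le_trans h2' (Int.le_ceil _)
      exact_mod_cast h3'
    exact ⟨key x.1 (le_trans (le_max_left _ _) h), key x.2 (le_trans (le_max_right _ _) h)⟩
  -- interior ball
  obtain ⟨z₀, hz₀D⟩ := hDne
  obtain ⟨r, hr0, hball⟩ := Metric.isOpen_iff.mp hDopen z₀ hz₀D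
  have hinf_ball : ∀ z : ℝ × ℝ, dist z z₀ ≤ r/2 → r/4 < infDist z Dᶜ := by
    intro z hz
    have hle : r/2 ≤ infDist z Dᶜ := by
      by_contra hlt
      push_neg at hlt
      rw [Metric.infDist_lt_iff hDc] at hlt
      obtain ⟨w, hw, hdw⟩ := hlt
      refine hw (hball ?_)
      rw [Metric.mem_ball]
      calc dist w z₀ ≤ dist w z + dist z z₀ := dist_triangle _ _ _
        _ < r/2 + r/2 := by rw [dist_comm w z]; exact add_lt_add_of_lt_of_le hdw hz
        _ = r := by ring
    linarith
  obtain ⟨N₂, hN₂⟩ := h2 (r/4) (by linarith)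
  -- lower bound on the cardinality of DN N
  have hlow : ∀ N : ℕ, N₂ ≤ N → N₀ ≤ N → 1 ≤ N → 4/r ≤ (N:ℝ) →
      ((N:ℝ)*r/4)^2 ≤ ((DN N).ncard : ℝ) := by
    intro N hNN₂ hNN₀ hN1 hNr
    have hN0 : (0:ℝ) < N := by exact_mod_cast hN1
    have hq2 : 2 ≤ (N:ℝ)*r/2 := by
      rw [div_le_iff₀ hr0] at hNr
      linarith
    set q : ℕ := ⌊(N:ℝ)*r/2⌋.toNat with hq
    have hq0 : (0:ℤ) ≤ ⌊(N:ℝ)*r/2⌋ := Int.le_floor.mpr (by push_cast; linarith)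
    have hqcast : (q:ℝ) = ((⌊(N:ℝ)*r/2⌋ : ℤ) : ℝ) := by
      rw [hq]
      exact_mod_cast Int.toNat_of_nonneg hq0
    have hqR : (q:ℝ) ≤ (N:ℝ)*r/2 := by rw [hqcast]; exact Int.floor_le _
    have hqL : (N:ℝ)*r/4 ≤ (q:ℝ) := by
      have h1' : (N:ℝ)*r/2 - 1 < (q:ℝ) := by rw [hqcast]; exact Int.sub_one_lt_floor _
      linarith
    set m₁ : ℤ := ⌈(N:ℝ)*(z₀.1 - r/2)⌉ with hm₁
    set m₂ : ℤ := ⌈(N:ℝ)*(z₀.2 - r/2)⌉ with hm₂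
    have key : ∀ (a : ℤ) (c : ℝ), ⌈(N:ℝ)*(c - r/2)⌉ ≤ a → a < ⌈(N:ℝ)*(c - r/2)⌉ + (q:ℤ) →
        dist ((a:ℝ)/N) c ≤ r/2 := by
      intro a c ha1 ha2
      have hlb : (N:ℝ)*(c - r/2) ≤ (a:ℝ) := le_trans (Int.le_ceil _) (by exact_mod_cast ha1)
      have hub : (a:ℝ) ≤ (N:ℝ)*c := by
        have h1' : a ≤ ⌈(N:ℝ)*(c - r/2)⌉ + (q:ℤ) - 1 := by omega
        have h1'' : (a:ℝ) ≤ ((⌈(N:ℝ)*(c - r/2)⌉ : ℤ) : ℝ) + (q:ℝ) - 1 := by exact_mod_cast h1'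
        have h2' : ((⌈(N:ℝ)*(c - r/2)⌉ : ℤ) : ℝ) < (N:ℝ)*(c - r/2) + 1 := Int.ceil_lt_add_one _
        nlinarith [hqR]
      have hdiv1 : c - r/2 ≤ (a:ℝ)/N := (le_div_iff₀ hN0).mpr (by nlinarith)
      have hdiv2 : (a:ℝ)/N ≤ c := (div_le_iff₀ hN0).mpr (by nlinarith)
      rw [Real.dist_eq, abs_le]
      constructor <;> linarith
    have hboxsub : ↑(Finset.Ico m₁ (m₁ + (q:ℤ)) ×ˢ Finset.Ico m₂ (m₂ + (q:ℤ))) ⊆ DN N := by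
      intro x hx
      rw [Finset.coe_product, Set.mem_prod] at hx
      obtain ⟨hx1, hx2⟩ := hx
      rw [Finset.mem_coe, Finset.mem_Ico] at hx1 hx2
      apply hN₂ N hNN₂ x
      apply hinf_ball
      rw [Prod.dist_eq]
      exact max_le (key x.1 z₀.1 hx1.1 hx1.2) (key x.2 z₀.2 hx2.1 hx2.2)
    have hcount := Set.ncard_le_ncard hboxsub (hfin N hNN₀ hN1)
    rw [Set.ncard_coe_finset, Finset.card_product, Int.card_Ico, Int.card_Ico] at hcount
    have htn : (m₁ + (q:ℤ) - m₁).toNat = q := by omega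
    have htn2 : (m₂ + (q:ℤ) - m₂).toNat = q := by omega
    rw [htn, htn2] at hcount
    have hcount' : ((q*q : ℕ) : ℝ) ≤ ((DN N).ncard : ℝ) := by exact_mod_cast hcount
    push_cast at hcount'
    have h0 : (0:ℝ) ≤ (N:ℝ)*r/4 := by positivity
    nlinarith [hqL, hcount']
  -- the shrinking boundary layers
  set T : ℕ → Set (ℝ × ℝ) := fun k => D ∩ {z | infDist z Dᶜ ≤ 1/((k:ℝ)+1)} with hT
  have hTmeas : ∀ k, MeasurableSet (T k) := fun k =>
    hDopen.measurableSet.inter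
      ((isClosed_le (continuous_infDist_pt _) continuous_const).measurableSet)
  have hTanti : Antitone T := by
    intro k l hkl z hz
    have h1k : (0:ℝ) < (k:ℝ)+1 := by positivity
    have hklr : ((k:ℝ)+1) ≤ ((l:ℝ)+1) := by
      have hkl' : (k:ℝ) ≤ (l:ℝ) := by exact_mod_cast hkl
      linarith
    refine ⟨hz.1, ?_⟩
    show infDist z Dᶜ ≤ 1/((k:ℝ)+1)
    exact le_trans hz.2 (one_div_le_one_div_of_le h1k hklr)
  have hTempty : ⋂ k, T k = ∅ := by
    rw [Set.eq_empty_iff_forall_notMem]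
    intro z hz
    rw [Set.mem_iInter] at hz
    have hzD : z ∈ D := (hz 0).1
    have h0 : infDist z Dᶜ = 0 := by
      by_contra h
      have hpos : 0 < infDist z Dᶜ := lt_of_le_of_ne Metric.infDist_nonneg (Ne.symm h)
      obtain ⟨n, hn⟩ := exists_nat_one_div_lt hpos
      exact absurd (hz n).2 (not_le.mpr hn)
    exact ((IsClosed.mem_iff_infDist_zero hDopen.isClosed_compl hDc).mpr h0) hzD
  have hTfin0 : volume (T 0) ≠ ⊤ := by
    have hsub : T 0 ⊆ closedBall (0 : ℝ × ℝ) R := fun z hz => hR hz.1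
    exact ne_top_of_le_ne_top (ne_of_lt (measure_closedBall_lt_top (x := (0 : ℝ × ℝ)) (r := R)))
      (measure_mono hsub)
  have htend := MeasureTheory.tendsto_measure_iInter_atTop
    (fun k => (hTmeas k).nullMeasurableSet) hTanti ⟨0, hTfin0⟩
  rw [hTempty, measure_empty] at htend
  -- main estimate
  rw [NormedAddCommGroup.tendsto_nhds_zero]
  intro ε hε
  have hε' : (0:ℝ≥0∞) < ENNReal.ofReal (ε * r^2 / 16) := by
    rw [ENNReal.ofReal_pos]; positivity
  obtain ⟨k, hk⟩ := (htend.eventually_lt_const hε').exists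
  set v := (volume (T k)).toReal with hv
  have hTkfin : volume (T k) ≠ ⊤ :=
    ne_top_of_le_ne_top hTfin0 (measure_mono (hTanti (Nat.zero_le k)))
  have hv0 : 0 ≤ v := ENNReal.toReal_nonneg
  have hvlt : v < ε * r^2/16 := by
    rw [hv]
    exact ENNReal.toReal_lt_of_lt_ofReal hk
  have hk1 : (0:ℝ) < 1/(3*((k:ℝ)+1)) := by positivity
  obtain ⟨N₃, hN₃⟩ := h2 (1/(3*((k:ℝ)+1))) hk1
  filter_upwards [eventually_ge_atTop N₀, eventually_ge_atTop N₂, eventually_ge_atTop N₃,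
    eventually_ge_atTop 1,
    tendsto_natCast_atTop_atTop.eventually_ge_atTop (4/r),
    tendsto_natCast_atTop_atTop.eventually_ge_atTop (3*((k:ℝ)+1))]
    with N hNN₀ hNN₂ hNN₃ hN1 hNr hNk
  have hN0 : (0:ℝ) < N := by exact_mod_cast hN1
  have hN1' : (1:ℝ) ≤ N := by exact_mod_cast hN1
  set E : Set ((ℤ×ℤ)×(ℤ×ℤ)) :=
    {p | p.1 ∈ DN N ∧ p.2 ∉ DN N ∧ |p.1.1 - p.2.1| + |p.1.2 - p.2.2| = 1} with hE
  set A : Set (ℤ×ℤ) := Prod.fst '' E with hA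
  have hAsub : A ⊆ DN N := by rintro x ⟨p, hp, rfl⟩; exact hp.1
  have hAfin : A.Finite := (hfin N hNN₀ hN1).subset hAsub
  have hδN : (1:ℝ)/N ≤ 1/(3*((k:ℝ)+1)) := one_div_le_one_div_of_le (by positivity) hNk
  -- each cube around a boundary vertex is inside `T k`
  have hcubesub : ∀ x ∈ A, cube N x ⊆ T k := by
    rintro x ⟨p, hp, rfl⟩ z hz
    obtain ⟨hp1, hp2, hp3⟩ := hp
    have hdz : dist z (((p.1.1:ℝ)/N, (p.1.2:ℝ)/N)) < 1/N := mem_cube_dist hN1' hz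
    have hinfx : 1/N < infDist (((p.1.1:ℝ)/N, (p.1.2:ℝ)/N)) Dᶜ := hN₀ N hNN₀ p.1 hp1
    have hzD : z ∈ D := by
      have hd' : dist (((p.1.1:ℝ)/N, (p.1.2:ℝ)/N)) z < infDist (((p.1.1:ℝ)/N, (p.1.2:ℝ)/N)) Dᶜ := by
        rw [dist_comm]; linarith
      have := Metric.notMem_of_dist_lt_infDist hd'
      simpa using this
    have hinfy : infDist (((p.2.1:ℝ)/N, (p.2.2:ℝ)/N)) Dᶜ ≤ 1/(3*((k:ℝ)+1)) := by
      by_contra h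
      push_neg at h
      exact hp2 (hN₃ N hNN₃ p.2 h)
    have hdxy : dist (((p.1.1:ℝ)/N, (p.1.2:ℝ)/N)) (((p.2.1:ℝ)/N, (p.2.2:ℝ)/N)) ≤ 1/N := by
      rw [Prod.dist_eq]
      have hb1 : |p.1.1 - p.2.1| ≤ 1 := by
        have := abs_nonneg (p.1.2 - p.2.2); omega
      have hb2 : |p.1.2 - p.2.2| ≤ 1 := by
        have := abs_nonneg (p.1.1 - p.2.1); omega
      apply max_le <;>
      · rw [Real.dist_eq, div_sub_div_same]
        rw [abs_div, abs_of_nonneg (le_of_lt hN0)]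
        gcongr
        · push_cast [← Int.cast_abs]
          exact_mod_cast (by assumption : _ ≤ (1:ℤ))
    have hinfx2 : infDist (((p.1.1:ℝ)/N, (p.1.2:ℝ)/N)) Dᶜ ≤ 1/(3*((k:ℝ)+1)) + 1/N :=
      le_trans Metric.infDist_le_infDist_add_dist (add_le_add hinfy hdxy)
    have hinfz : infDist z Dᶜ ≤ infDist (((p.1.1:ℝ)/N, (p.1.2:ℝ)/N)) Dᶜ + dist z (((p.1.1:ℝ)/N, (p.1.2:ℝ)/N)) :=
      Metric.infDist_le_infDist_add_dist
    refine ⟨hzD, ?_⟩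
    show infDist z Dᶜ ≤ 1/((k:ℝ)+1)
    have heq : (1:ℝ)/(3*((k:ℝ)+1)) + 1/(3*((k:ℝ)+1)) + 1/(3*((k:ℝ)+1)) = 1/((k:ℝ)+1) := by
      have h1k : ((k:ℝ)+1) ≠ 0 := by positivity
      field_simp
      norm_num
    linarith
  have hAcount : (A.ncard : ℝ) ≤ (N:ℝ)^2 * v :=
    card_le_of_cubes hN1' hAfin hcubesub hTkfin
  -- degρ N ≤ 4 * |A|
  have hdeg : (degρ N : ℝ) ≤ 4 * (A.ncard : ℝ) := by
    have hmain : E.ncard ≤ A.ncard * 4 := by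
      set dirs : Finset (ℤ×ℤ) := {(1,0), (-1,0), (0,1), (0,-1)} with hdirs
      have hmap : ∀ p ∈ E, (fun p : (ℤ×ℤ)×(ℤ×ℤ) => (p.1, p.2 - p.1)) p ∈
          ((hAfin.toFinset ×ˢ dirs : Finset ((ℤ×ℤ)×(ℤ×ℤ))) : Set ((ℤ×ℤ)×(ℤ×ℤ))) := by
        intro p hp
        rw [Finset.mem_coe, Finset.mem_product]
        refine ⟨hAfin.mem_toFinset.mpr ⟨p, hp, rfl⟩, ?_⟩
        have h4 : |p.2.1 - p.1.1| + |p.2.2 - p.1.2| = 1 := by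
          rw [abs_sub_comm, abs_sub_comm p.2.2]
          exact hp.2.2
        have hsubeq : p.2 - p.1 = (p.2.1 - p.1.1, p.2.2 - p.1.2) := rfl
        rcases dir4 h4 with h | h | h | h <;>
          simp only [hsubeq, h, hdirs] <;> decide
      have hinj : Set.InjOn (fun p : (ℤ×ℤ)×(ℤ×ℤ) => (p.1, p.2 - p.1)) E := by
        intro p _ q _ h
        rw [Prod.ext_iff] at h
        obtain ⟨h1, h2⟩ := h
        simp only at h1 h2
        rw [h1] at h2
        exact Prod.ext h1 (sub_left_inj.mp h2)
      have hle := Set.ncard_le_ncard_of_injOn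
        (t := ((hAfin.toFinset ×ˢ dirs : Finset ((ℤ×ℤ)×(ℤ×ℤ))) : Set ((ℤ×ℤ)×(ℤ×ℤ))))
        _ hmap hinj (Finset.finite_toSet _)
      rw [Set.ncard_coe_finset, Finset.card_product] at hle
      have hdirscard : dirs.card = 4 := by decide
      rw [hdirscard] at hle
      rwa [Set.ncard_eq_toFinset_card A hAfin]
    rw [hdegρ N]
    calc ({p : (ℤ × ℤ) × (ℤ × ℤ) |
        p.1 ∈ DN N ∧ p.2 ∉ DN N ∧ |p.1.1 - p.2.1| + |p.1.2 - p.2.2| = 1}.ncard : ℝ)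
        = (E.ncard : ℝ) := by rw [hE]
      _ ≤ ((A.ncard * 4 : ℕ) : ℝ) := by exact_mod_cast hmain
      _ = 4 * (A.ncard : ℝ) := by push_cast; ring
  -- lower bound on |DN N|
  have hlowN := hlow N hNN₂ hNN₀ hN1 hNr
  have hpos2 : (0:ℝ) < ((N:ℝ)*r/4)^2 := by positivity
  have hncard_pos : (0:ℝ) < ((DN N).ncard : ℝ) := lt_of_lt_of_le hpos2 hlowN
  have hdegnn : (0:ℝ) ≤ (degρ N : ℝ) := Nat.cast_nonneg _
  have hratio_nn : (0:ℝ) ≤ (degρ N : ℝ) / (4 * ((DN N).ncard : ℝ) + (degρ N : ℝ)) := by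
    apply div_nonneg hdegnn
    linarith
  rw [Real.norm_eq_abs, abs_of_nonneg hratio_nn]
  calc (degρ N : ℝ) / (4 * ((DN N).ncard : ℝ) + (degρ N : ℝ))
      ≤ (4 * ((N:ℝ)^2 * v)) / (4 * ((N:ℝ)*r/4)^2) := by
        apply div_le_div₀ (by positivity) (by linarith [hAcount]) (by positivity)
        linarith
    _ = 16 * v / r^2 := by
        field_simp
        ring
    _ < ε := by
        rw [div_lt_iff₀ (by positivity)]
        nlinarith [hvlt]
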